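/- Let k+1 be an odd prime. For every vector v in (Z/(k+1))^k that is nonzero but has at least one zero coordinate, there exist units s and r in (Z/(k+1))^* such that every coordinate of s·v + r·(1,2,...,k) lies in {1,...,k-1} (mod k+1). -/
import Mathlib

theorem stmt_0 (k : ℕ) (hp : Nat.Prime (k + 1)) (hodd : Odd (k + 1))
    (v : Fin k → ZMod (k + 1)) (hv : v ≠ 0) (hz : ∃ i, v i = 0) :
    ∃ s r : (ZMod (k + 1))ˣ, ∀ i : Fin k,
      1 ≤ ((s : ZMod (k + 1)) * v i + (r : ZMod (k + 1)) * ((i : ℕ) + 1)).val ∧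
      ((s : ZMod (k + 1)) * v i + (r : ZMod (k + 1)) * ((i : ℕ) + 1)).val ≤ k - 1 := by
  haveI : Fact (Nat.Prime (k + 1)) := ⟨hp⟩
  have hk2 : 2 ≤ k := by
    obtain ⟨m, hm⟩ := hodd
    have h2 := hp.two_le
    rcases Nat.lt_or_ge k 2 with h | h
    · interval_cases k
      · omega
      · omega
    · exact h
  set t : Fin k → ZMod (k + 1) := fun i => ((i : ℕ) : ZMod (k + 1)) + 1 with ht_def
  have ht : ∀ i, t i ≠ 0 := by
    intro i hti
    have h1 : (((i : ℕ) + 1 : ℕ) : ZMod (k + 1)) = 0 := by push_cast; exact hti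
    rw [ZMod.natCast_eq_zero_iff] at h1
    have := Nat.le_of_dvd (by omega) h1
    omega
  -- key claim: some q ≠ 0 makes i ↦ v i + q * t i nonvanishing and non-injective
  obtain ⟨q, hq0, hqnz, hqni⟩ :
      ∃ q : ZMod (k + 1), q ≠ 0 ∧ (∀ i, v i + q * t i ≠ 0) ∧
        ¬ Function.Injective (fun i => v i + q * t i) := by
    by_contra hcon
    push_neg at hcon
    -- hcon : ∀ q ≠ 0, nonvanishing → injective
    set S : Finset (ZMod (k + 1)) :=
      Finset.image (fun i => -(v i) * (t i)⁻¹) Finset.univ with hS_def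
    have h0S : (0 : ZMod (k + 1)) ∈ S := by
      obtain ⟨i0, hi0⟩ := hz
      refine Finset.mem_image.2 ⟨i0, Finset.mem_univ _, ?_⟩
      rw [hi0]; ring
    have hScard : 2 ≤ S.card := by
      obtain ⟨i1, hi1⟩ : ∃ i, v i ≠ 0 := by
        by_contra h; push_neg at h; exact hv (funext h)
      have hmem : -(v i1) * (t i1)⁻¹ ∈ S :=
        Finset.mem_image.2 ⟨i1, Finset.mem_univ _, rfl⟩
      have hne : -(v i1) * (t i1)⁻¹ ≠ 0 :=
        mul_ne_zero (neg_ne_zero.2 hi1) (inv_ne_zero (ht i1))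
      exact Finset.one_lt_card.2 ⟨0, h0S, _, hmem, fun h => hne h.symm⟩
    set H : ZMod (k + 1) → ZMod (k + 1) := fun q => ∏ i, (v i + q * t i) with hH_def
    have hHS : ∀ q ∈ S, H q = 0 := by
      intro q hq
      obtain ⟨i, _, hi⟩ := Finset.mem_image.1 hq
      refine Finset.prod_eq_zero (Finset.mem_univ i) ?_
      rw [← hi, mul_assoc, inv_mul_cancel₀ (ht i)]
      ring
    have hHSc : ∀ q ∉ S, H q = -1 := by
      intro q hq
      have hqz : q ≠ 0 := fun h => hq (h ▸ h0S)
      have hnz : ∀ i, v i + q * t i ≠ 0 := by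
        intro i hzero
        refine hq (Finset.mem_image.2 ⟨i, Finset.mem_univ _, ?_⟩)
        have hvi : v i = -(q * t i) := by linear_combination hzero
        rw [hvi, neg_neg, mul_assoc, mul_inv_cancel₀ (ht i), mul_one]
      have hinj := hcon q hqz hnz
      -- image is exactly the nonzero elements
      have himg : Finset.image (fun i => v i + q * t i) Finset.univ =
          (Finset.univ : Finset (ZMod (k + 1))).erase 0 := by
        apply Finset.eq_of_subset_of_card_le
        · intro x hx
          obtain ⟨i, _, hi⟩ := Finset.mem_image.1 hx
          exact Finset.mem_erase.2 ⟨hi ▸ hnz i, Finset.mem_univ _⟩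
        · rw [Finset.card_erase_of_mem (Finset.mem_univ _),
            Finset.card_image_of_injective _ hinj]
          simp [ZMod.card]
      have hprod_erase : ∏ x ∈ (Finset.univ : Finset (ZMod (k + 1))).erase 0, x = -1 := by
        have h1 : ∏ u : (ZMod (k + 1))ˣ, (u : ZMod (k + 1)) = -1 := by
          simp_rw [← Units.coeHom_apply]
          rw [← map_prod (Units.coeHom (ZMod (k + 1)))]
          simp_rw [FiniteField.prod_univ_units_id_eq_neg_one, Units.coeHom_apply,
            Units.val_neg, Units.val_one]
        rw [← h1]
        refine (Finset.prod_bij' (fun (u : (ZMod (k + 1))ˣ) _ => (u : ZMod (k + 1)))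
          (fun x hx => Units.mk0 x (Finset.mem_erase.1 hx).1) ?_ ?_ ?_ ?_ ?_).symm
        · intro u _
          exact Finset.mem_erase.2 ⟨u.ne_zero, Finset.mem_univ _⟩
        · intro x hx; exact Finset.mem_univ _
        · intro u _; exact Units.ext rfl
        · intro x hx; rfl
        · intro u _; rfl
      calc H q = ∏ x ∈ Finset.image (fun i => v i + q * t i) Finset.univ, x := by
            rw [Finset.prod_image (fun a _ b _ h => hinj h)]
        _ = -1 := by rw [himg, hprod_erase]
    have hcardS : S.card ≤ k := by
      calc S.card ≤ (Finset.univ : Finset (Fin k)).card := Finset.card_image_le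
        _ = k := by simp
    have hway1 : ∑ q : ZMod (k + 1), H q = ((k + 1 - S.card : ℕ) : ZMod (k + 1)) * (-1) := by
      rw [← Finset.sum_sdiff (Finset.subset_univ S)]
      rw [Finset.sum_eq_zero hHS, add_zero]
      rw [Finset.sum_congr rfl (fun q hq => hHSc q (Finset.mem_sdiff.1 hq).2)]
      rw [Finset.sum_const, Finset.card_sdiff_of_subset (Finset.subset_univ S)]
      have hc : (Finset.univ : Finset (ZMod (k + 1))).card = k + 1 := by simp [ZMod.card]
      rw [hc, nsmul_eq_mul]
    -- sum of powers of q
    have hzsum : ∀ m : ℕ, m ≤ k →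
        (∑ q : ZMod (k + 1), q ^ m) = if m = k then -1 else 0 := by
      intro m hm
      by_cases hmk : m = k
      · rw [if_pos hmk, hmk]
        have h1 : ∀ q ∈ (Finset.univ : Finset (ZMod (k + 1))).erase 0, q ^ k = 1 := by
          intro q hq
          have hq0 : q ≠ 0 := (Finset.mem_erase.1 hq).1
          have := ZMod.pow_card_sub_one_eq_one hq0
          simpa using this
        rw [← Finset.add_sum_erase _ _ (Finset.mem_univ (0 : ZMod (k + 1)))]
        rw [Finset.sum_congr rfl h1, Finset.sum_const,
          Finset.card_erase_of_mem (Finset.mem_univ _)]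
        have hc : (Finset.univ : Finset (ZMod (k + 1))).card = k + 1 := by simp [ZMod.card]
        rw [hc, zero_pow (by omega), nsmul_eq_mul, mul_one, zero_add]
        have hsub : k + 1 - 1 = k := by omega
        rw [hsub]
        have hz1 : ((k + 1 : ℕ) : ZMod (k + 1)) = 0 := by simp
        push_cast at hz1 ⊢
        linear_combination hz1
      · rw [if_neg hmk]
        have := FiniteField.sum_pow_lt_card_sub_one (K := ZMod (k + 1)) m ?_
        · exact this
        · rw [ZMod.card]; omega
    have hprod_t : ∏ i : Fin k, t i = -1 := by
      have h1 : ∏ i : Fin k, t i = ((∏ i : Fin k, ((i : ℕ) + 1) : ℕ) : ZMod (k + 1)) := by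
        rw [Nat.cast_prod]
        exact Finset.prod_congr rfl (fun i _ => by push_cast; ring)
      have h2 : (∏ i : Fin k, ((i : ℕ) + 1)) = Nat.factorial k := by
        rw [Fin.prod_univ_eq_prod_range (fun i => i + 1) k]
        exact Finset.prod_range_add_one_eq_factorial k
      have h3 : ((Nat.factorial k : ℕ) : ZMod (k + 1)) = -1 := by
        have := ZMod.wilsons_lemma (k + 1)
        simpa using this
      rw [h1, h2, h3]
    -- second way
    have hway2 : ∑ q : ZMod (k + 1), H q = 1 := by
      have hexp : ∀ q : ZMod (k + 1), H q =
          ∑ T ∈ (Finset.univ : Finset (Fin k)).powerset,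
            (∏ i ∈ T, v i) * (∏ i ∈ Finset.univ \ T, t i) * q ^ (Finset.univ \ T).card := by
        intro q
        show (∏ i : Fin k, (v i + q * t i)) = _
        rw [Finset.prod_add (fun i => v i) (fun i => q * t i) Finset.univ]
        refine Finset.sum_congr rfl (fun T _ => ?_)
        rw [Finset.prod_mul_distrib, Finset.prod_const]
        ring
      rw [Finset.sum_congr rfl (fun q _ => hexp q), Finset.sum_comm]
      have hterm : ∀ T ∈ (Finset.univ : Finset (Fin k)).powerset,
          (∑ q : ZMod (k + 1),
            (∏ i ∈ T, v i) * (∏ i ∈ Finset.univ \ T, t i) * q ^ (Finset.univ \ T).card)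
          = if T = ∅ then 1 else 0 := by
        intro T hT
        have hfact : ∀ q : ZMod (k + 1),
            (∏ i ∈ T, v i) * (∏ i ∈ Finset.univ \ T, t i) * q ^ (Finset.univ \ T).card
            = ((∏ i ∈ T, v i) * (∏ i ∈ Finset.univ \ T, t i)) * q ^ (Finset.univ \ T).card :=
          fun q => rfl
        rw [Finset.sum_congr rfl (fun q _ => hfact q), ← Finset.mul_sum]
        have hcard : (Finset.univ \ T).card = k - T.card := by
          rw [Finset.card_sdiff_of_subset (Finset.subset_univ T)]; simp
        by_cases hTe : T = ∅
        · subst hTe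
          rw [if_pos rfl]
          have hck : (Finset.univ \ (∅ : Finset (Fin k))).card = k := by
            simp
          rw [hck, hzsum k le_rfl, if_pos rfl]
          rw [Finset.prod_empty, Finset.sdiff_empty, hprod_t]
          ring
        · rw [if_neg hTe]
          have hTc : 1 ≤ T.card := Finset.card_pos.2 (Finset.nonempty_of_ne_empty hTe)
          have hTk : T.card ≤ k := by
            calc T.card ≤ (Finset.univ : Finset (Fin k)).card :=
                  Finset.card_le_card (Finset.subset_univ T)
              _ = k := by simp
          rw [hcard, hzsum _ (by omega), if_neg (by omega), mul_zero]
      rw [Finset.sum_congr rfl hterm]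
      rw [Finset.sum_ite_eq' (Finset.univ : Finset (Fin k)).powerset ∅
        (fun _ => (1 : ZMod (k + 1)))]
      simp
    -- contradiction
    rw [hway2] at hway1
    have hcast : ((k + 1 - S.card : ℕ) : ZMod (k + 1)) = ((k : ℕ) : ZMod (k + 1)) := by
      have hkcast : ((k : ℕ) : ZMod (k + 1)) = -1 := by
        have hz1 : ((k + 1 : ℕ) : ZMod (k + 1)) = 0 := by simp
        push_cast at hz1 ⊢
        linear_combination hz1
      rw [hkcast]
      linear_combination hway1
    have e1 := ZMod.val_cast_of_lt (n := k + 1) (a := k + 1 - S.card) (by omega)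
    have e2 := ZMod.val_cast_of_lt (n := k + 1) (a := k) (by omega)
    rw [hcast] at e1
    omega
  -- use q to build s and r
  obtain ⟨c, hc0, hcmiss⟩ : ∃ c : ZMod (k + 1), c ≠ 0 ∧ ∀ i, v i + q * t i ≠ c := by
    have hsub : Finset.image (fun i => v i + q * t i) Finset.univ ⊆
        (Finset.univ : Finset (ZMod (k + 1))).erase 0 := by
      intro x hx
      obtain ⟨i, _, hi⟩ := Finset.mem_image.1 hx
      exact Finset.mem_erase.2 ⟨hi ▸ hqnz i, Finset.mem_univ _⟩
    have hlt : (Finset.image (fun i => v i + q * t i) Finset.univ).card <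
        ((Finset.univ : Finset (ZMod (k + 1))).erase 0).card := by
      have hce : ((Finset.univ : Finset (ZMod (k + 1))).erase 0).card = k := by
        rw [Finset.card_erase_of_mem (Finset.mem_univ _)]
        simp [ZMod.card]
      rw [hce]
      rcases Nat.lt_or_ge (Finset.image (fun i => v i + q * t i) Finset.univ).card k with h | h
      · exact h
      · exfalso
        apply hqni
        have heq : (Finset.image (fun i => v i + q * t i) Finset.univ).card
            = (Finset.univ : Finset (Fin k)).card := by
          have hle := Finset.card_image_le
            (s := (Finset.univ : Finset (Fin k))) (f := fun i => v i + q * t i)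
          simp only [Finset.card_univ, Fintype.card_fin] at hle ⊢
          omega
        have := Finset.card_image_iff.1 heq
        intro a b hab
        exact this (Finset.mem_coe.2 (Finset.mem_univ a)) (Finset.mem_coe.2 (Finset.mem_univ b)) hab
    obtain ⟨c, hcmem, hcnot⟩ : ∃ x ∈ (Finset.univ : Finset (ZMod (k + 1))).erase 0,
        x ∉ Finset.image (fun i => v i + q * t i) Finset.univ := by
      by_contra hall
      push_neg at hall
      have hsub2 : (Finset.univ : Finset (ZMod (k + 1))).erase 0 ⊆
          Finset.image (fun i => v i + q * t i) Finset.univ := fun x hx => hall x hx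
      exact absurd (Finset.card_le_card hsub2) (by omega)
    refine ⟨c, (Finset.mem_erase.1 hcmem).1, fun i hi => hcnot ?_⟩
    exact Finset.mem_image.2 ⟨i, Finset.mem_univ _, hi⟩
  have hs0 : (-c⁻¹ : ZMod (k + 1)) ≠ 0 := neg_ne_zero.2 (inv_ne_zero hc0)
  have hr0 : (-c⁻¹ * q : ZMod (k + 1)) ≠ 0 := mul_ne_zero hs0 hq0
  refine ⟨Units.mk0 _ hs0, Units.mk0 _ hr0, fun i => ?_⟩
  simp only [Units.val_mk0]
  have hexpr : (-c⁻¹ : ZMod (k + 1)) * v i + (-c⁻¹ * q) * (((i : ℕ) : ZMod (k + 1)) + 1)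
      = -c⁻¹ * (v i + q * t i) := by
    rw [ht_def]; ring
  rw [hexpr]
  set y : ZMod (k + 1) := -c⁻¹ * (v i + q * t i) with hy
  have hyne0 : y ≠ 0 := by
    rw [hy]; exact mul_ne_zero hs0 (hqnz i)
  have hynek : y ≠ -1 := by
    rw [hy]
    intro hxk
    apply hcmiss i
    have hcc : c * c⁻¹ = 1 := mul_inv_cancel₀ hc0
    linear_combination (-c) * hxk - (v i + q * t i) * hcc
  have hvlt : y.val < k + 1 := ZMod.val_lt y
  have hv0 : y.val ≠ 0 := fun h => hyne0 ((ZMod.val_eq_zero y).1 h)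
  have hvk : y.val ≠ k := by
    intro h
    apply hynek
    have hxv : ((y.val : ℕ) : ZMod (k + 1)) = y := ZMod.natCast_rightInverse y
    rw [← hxv, h]
    have hz1 : ((k + 1 : ℕ) : ZMod (k + 1)) = 0 := by simp
    push_cast at hz1 ⊢
    linear_combination hz1
  exact ⟨by omega, by omega⟩
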